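/- Let F : C → Set be a functor from a small category C, and let J : ob(C) → C be the inclusion of the discrete category on the objects of C. Then the category of elements el(F) is a disjoint union of categories each having an initial object if and only if there exists a functor G : ob(C) → Set and a natural isomorphism Lan_J G ≅ F. -/

import Mathlib

open CategoryTheory

universe u

/-- The explicit pointwise formula for the left Kan extension of a functor
`G : ob C → Set` along the inclusion `J : ob C → C` of the discrete category of
objects: `(Lan_J G)(c) = Σ_{c' ∈ C, x ∈ G c'} C(c', c)`. -/
def lanExplicit {C : Type u} [SmallCategory C] (G : C → Type u) : C ⥤ Type u where
  obj c := Σ c' : C, G c' × (c' ⟶ c)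
  map f := TypeCat.ofHom fun p => ⟨p.1, p.2.1, p.2.2 ≫ f⟩
  map_id c := by ext ⟨a, x, g⟩ : 3; simp
  map_comp f g := by ext ⟨a, x, h⟩ : 3; simp

/-- Constructor for objects of the category of elements. -/
def elMk {C : Type u} [SmallCategory C] (F : C ⥤ Type u) (c : C) (x : F.obj c) :
    F.Elements := ⟨c, x⟩

/-- Extract the hom component from a sigma equality. -/
lemma sigma_extract {C : Type u} [SmallCategory C] {G : C → Type u} {d p1 : C} {p2 : G p1}
    (q : Σ a : C, G a × (a ⟶ d))
    (h : (⟨q.1, q.2.1⟩ : Σ a : C, G a) = ⟨p1, p2⟩) :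
    ∃ f : p1 ⟶ d, q = ⟨p1, p2, f⟩ := by
  obtain ⟨a, g, f⟩ := q
  obtain ⟨h1, h2⟩ := Sigma.ext_iff.mp h
  dsimp at h1 h2
  subst h1
  obtain rfl := eq_of_heq h2
  exact ⟨f, rfl⟩

/-- For a functor `F : C → Set`, the category of elements `el(F)` is a
disjoint union of categories each having an initial object (i.e. every connected
component of `el(F)` contains an object which is initial in that component) if and
only if `F` is naturally isomorphic to the left Kan extension `Lan_J G` of some
functor `G : ob C → Set` along the inclusion of the discrete category of objects. -/
theorem elements_components_initial_iff_lan_from_discrete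
    {C : Type u} [SmallCategory C] (F : C ⥤ Type u) :
    (∀ X : F.Elements, ∃ Y : F.Elements, Zigzag Y X ∧
      ∀ Z : F.Elements, Zigzag Y Z → ∃! _ : (Y ⟶ Z), True) ↔
    ∃ G : C → Type u, Nonempty (lanExplicit G ≅ F) := by
  classical
  constructor
  · intro h
    choose Y hYX hYinit using h
    letI S : Setoid F.Elements := Zigzag.setoid F.Elements
    let sel : Quotient S → F.Elements := fun k => Y k.out
    have selzig : ∀ k : Quotient S, (⟦sel k⟧ : Quotient S) = k := fun k => by
      have h1 : (⟦Y k.out⟧ : Quotient S) = ⟦k.out⟧ := Quotient.sound (hYX k.out)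
      exact h1.trans (Quotient.out_eq k)
    have selinit : ∀ (k : Quotient S) (Z : F.Elements), Zigzag (sel k) Z →
        ∃! _ : (sel k ⟶ Z), True := fun k => hYinit k.out
    refine ⟨fun a => {x : F.obj a // sel ⟦elMk F a x⟧ = elMk F a x}, ⟨?_⟩⟩
    refine NatIso.ofComponents
      (fun c => Equiv.toIso (Equiv.ofBijective
        (fun p => F.map p.2.2 p.2.1.1) ⟨?_, ?_⟩)) ?_
    · -- injective
      rintro ⟨a, ⟨x, hx⟩, f⟩ ⟨b, ⟨y, hy⟩, g⟩ hfg
      dsimp at hfg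
      have m1 : elMk F a x ⟶ elMk F _ (F.map f x) := ⟨f, rfl⟩
      have m2 : elMk F b y ⟶ elMk F _ (F.map f x) := ⟨g, hfg.symm⟩
      have hk : (⟦elMk F a x⟧ : Quotient S) = ⟦elMk F b y⟧ :=
        Quotient.sound ((Zigzag.of_hom m1).trans (Zigzag.of_hom m2).symm)
      have hab : elMk F a x = elMk F b y := by rw [← hx, ← hy, hk]
      have h1 : a = b := congrArg Sigma.fst hab
      subst h1
      have h2 : x = y := eq_of_heq (Sigma.ext_iff.mp hab).2
      subst h2
      have h0 := selinit ⟦elMk F a x⟧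
      rw [hx] at h0
      obtain ⟨u, -, huniq⟩ := h0 (elMk F _ (F.map f x)) (Zigzag.of_hom m1)
      have w1 := huniq ⟨f, rfl⟩ trivial
      have w2 := huniq ⟨g, hfg.symm⟩ trivial
      have hfgeq : f = g := congrArg Subtype.val (w1.trans w2.symm)
      subst hfgeq
      rfl
    · -- surjective
      intro y
      set X : F.Elements := elMk F _ y with hXdef
      have hz : Zigzag (sel ⟦X⟧) X := Quotient.exact (selzig ⟦X⟧)
      obtain ⟨u, -, -⟩ := selinit ⟦X⟧ X hz
      refine ⟨⟨(sel ⟦X⟧).1, ⟨(sel ⟦X⟧).2, ?_⟩, u.1⟩, u.2⟩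
      have heta : elMk F (sel ⟦X⟧).1 (sel ⟦X⟧).2 = sel ⟦X⟧ := rfl
      rw [heta, selzig]
    · -- naturality
      intro c d f
      ext ⟨a, ⟨x, hx⟩, g⟩ : 3
      simp [lanExplicit, FunctorToTypes.map_comp_apply]
  · rintro ⟨G, ⟨e⟩⟩
    intro X
    have injinv : ∀ (d : C), Function.Injective (e.inv.app d) := fun d a b hab => by
      have := congrArg (e.hom.app d) hab
      simpa only [FunctorToTypes.inv_hom_id_app_apply] using this
    set p := e.inv.app X.1 X.2 with hp
    set Y : F.Elements := ⟨p.1, e.hom.app p.1 ⟨p.1, p.2.1, 𝟙 p.1⟩⟩ with hYdef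
    have hYp : e.inv.app p.1 Y.2 = ⟨p.1, p.2.1, 𝟙 p.1⟩ :=
      FunctorToTypes.hom_inv_id_app_apply e p.1 _
    have key : ∀ {d : C} (f : p.1 ⟶ d),
        e.inv.app d (F.map f Y.2) = ⟨p.1, p.2.1, f⟩ := by
      intro d f
      rw [FunctorToTypes.naturality e.inv f, hYp]
      show (⟨p.1, p.2.1, 𝟙 p.1 ≫ f⟩ : Σ a : C, G a × (a ⟶ d)) = ⟨p.1, p.2.1, f⟩
      rw [Category.id_comp]
    have homYX : Y ⟶ X := ⟨p.2.2, injinv X.1 (by rw [key p.2.2]; exact hp)⟩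
    have step : ∀ {A B : F.Elements} (u : A ⟶ B),
        (⟨(e.inv.app A.1 A.2).1, (e.inv.app A.1 A.2).2.1⟩ : Σ a : C, G a) =
        ⟨(e.inv.app B.1 B.2).1, (e.inv.app B.1 B.2).2.1⟩ := by
      intro A B u
      rw [← u.2, FunctorToTypes.naturality e.inv u.1]
      rfl
    have invzig : ∀ {A B : F.Elements}, Zigzag A B →
        (⟨(e.inv.app A.1 A.2).1, (e.inv.app A.1 A.2).2.1⟩ : Σ a : C, G a) =
        ⟨(e.inv.app B.1 B.2).1, (e.inv.app B.1 B.2).2.1⟩ := by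
      intro A B hAB
      induction hAB with
      | refl => rfl
      | tail _ hzag ih =>
        refine ih.trans ?_
        rcases hzag with ⟨⟨u⟩⟩ | ⟨⟨u⟩⟩
        · exact step u
        · exact (step u).symm
    refine ⟨Y, Zigzag.of_hom homYX, fun Z hz => ?_⟩
    have hIY : (⟨(e.inv.app Y.1 Y.2).1, (e.inv.app Y.1 Y.2).2.1⟩ : Σ a : C, G a)
        = ⟨p.1, p.2.1⟩ := by
      show (⟨(e.inv.app p.1 Y.2).1, (e.inv.app p.1 Y.2).2.1⟩ : Σ a : C, G a) = ⟨p.1, p.2.1⟩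
      rw [hYp]
    have hIZ : (⟨(e.inv.app Z.1 Z.2).1, (e.inv.app Z.1 Z.2).2.1⟩ : Σ a : C, G a)
        = ⟨p.1, p.2.1⟩ := (invzig hz.symm).trans hIY
    obtain ⟨f, hf⟩ := sigma_extract (e.inv.app Z.1 Z.2) hIZ
    refine ⟨⟨f, injinv Z.1 ?_⟩, trivial, ?_⟩
    · rw [key f, hf]
    · rintro ⟨v, hv⟩ -
      have hq : e.inv.app Z.1 Z.2 = ⟨p.1, p.2.1, v⟩ := by rw [← hv, key v]
      have hvf : (⟨p.1, p.2.1, v⟩ : Σ a : C, G a × (a ⟶ Z.1)) = ⟨p.1, p.2.1, f⟩ :=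
        hq.symm.trans hf
      apply Subtype.ext
      have h2 := eq_of_heq (Sigma.ext_iff.mp hvf).2
      exact congrArg Prod.snd h2
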